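/- arXiv:1105.3230 — 3 statements merged into one kernel-verified Lean document; each statement's English description precedes it below -/
import Mathlib

section
/- Let S be symmetric and A skew-symmetric operators on a complex Hilbert space, time-independent, ψ a bounded symmetric operator, and f: ℝ → H twice differentiable with values in the relevant domains. Then d/dt Re(⟨Af, ∂_t f⟩ + ⟨ψ f, ∂_t f⟩) = (1/2)⟨[S,A]f,f⟩ + ⟨ψ ∂_t f, ∂_t f⟩ + ‖Af‖² + Re⟨ψ f,(S+A)f⟩ + Re⟨Af + ψ f, (∂²_t - (S+A))f⟩. -/
open scoped InnerProductSpace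

/-- Derivative identity for the Carleman multiplier: with `S` symmetric, `A` skew-symmetric,
`ψ` bounded symmetric (all time-independent), and `f` twice differentiable,
`d/dt Re(⟨Af, f'⟩ + ⟨ψf, f'⟩) = (1/2)⟨[S,A]f,f⟩ + ⟨ψf',f'⟩ + ‖Af‖²
 + Re⟨ψf,(S+A)f⟩ + Re⟨Af + ψf, (f'' - (S+A)f)⟩`. -/
theorem stmt4 {H : Type*} [NormedAddCommGroup H] [InnerProductSpace ℂ H]
    (S A ψ : H →L[ℂ] H)
    (hS : ∀ x y : H, ⟪S x, y⟫_ℂ = ⟪x, S y⟫_ℂ)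
    (hA : ∀ x y : H, ⟪A x, y⟫_ℂ = -⟪x, A y⟫_ℂ)
    (hψ : ∀ x y : H, ⟪ψ x, y⟫_ℂ = ⟪x, ψ y⟫_ℂ)
    (f f' f'' : ℝ → H)
    (hf : ∀ t, HasDerivAt f (f' t) t)
    (hf' : ∀ t, HasDerivAt f' (f'' t) t) (t : ℝ) :
    HasDerivAt (fun s => (⟪A (f s), f' s⟫_ℂ + ⟪ψ (f s), f' s⟫_ℂ).re)
      ((1/2) * (⟪S (A (f t)) - A (S (f t)), f t⟫_ℂ).re
        + (⟪ψ (f' t), f' t⟫_ℂ).re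
        + ‖A (f t)‖ ^ 2
        + (⟪ψ (f t), S (f t) + A (f t)⟫_ℂ).re
        + (⟪A (f t) + ψ (f t), f'' t - (S (f t) + A (f t))⟫_ℂ).re) t := by
  have hAf : HasDerivAt (fun s => A (f s)) (A (f' t)) t :=
    (A.restrictScalars ℝ).hasFDerivAt.comp_hasDerivAt t (hf t)
  have hψf : HasDerivAt (fun s => ψ (f s)) (ψ (f' t)) t :=
    (ψ.restrictScalars ℝ).hasFDerivAt.comp_hasDerivAt t (hf t)
  have h1 := (hAf.inner ℂ (hf' t)).add (hψf.inner ℂ (hf' t))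
  have h2 := Complex.reCLM.hasFDerivAt.comp_hasDerivAt t h1
  convert h2 using 1
  iterate 3 rfl
  set x := f t
  set v := f' t
  set w := f'' t
  have hre : ∀ a b : H, (⟪a, b⟫_ℂ).re = (⟪b, a⟫_ℂ).re := by
    intro a b
    rw [← inner_conj_symm a b, Complex.conj_re]
  have f1 : (⟪A v, v⟫_ℂ).re = 0 := by
    have h := congrArg Complex.re (hA v v)
    rw [Complex.neg_re, hre v (A v)] at h
    linarith
  have f2 : ‖A x‖ ^ 2 = (⟪A x, A x⟫_ℂ).re := by
    rw [← inner_self_eq_norm_sq (𝕜 := ℂ)]; simp [RCLike.re_to_complex]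
  have f3 : (⟪S (A x), x⟫_ℂ).re = (⟪A x, S x⟫_ℂ).re := by rw [hS]
  have f4 : (⟪A (S x), x⟫_ℂ).re = -(⟪A x, S x⟫_ℂ).re := by
    have h := congrArg Complex.re (hA (S x) x)
    rw [Complex.neg_re, hre (S x) (A x)] at h
    exact h
  simp only [inner_sub_left, inner_add_left, inner_sub_right, inner_add_right,
    Complex.add_re, Complex.sub_re, Complex.reCLM_apply]
  linarith
end

section
/- In the setting of the monotonicity lemma, for any T₀ < T₁: (1/2)∫_{T₀}^{T₁}⟨[S,A]f,f⟩ dt + ∫_{T₀}^{T₁}⟨ψ∂_t f,∂_t f⟩ dt + (1/2)∫_{T₀}^{T₁}‖Af‖² dt + Re∫_{T₀}^{T₁}⟨(S+A)f, ψf⟩ dt ≤ ∫_{T₀}^{T₁}‖(∂²_t - (S+A))f‖² dt + (1/2)∫_{T₀}^{T₁}⟨ψ²f,f⟩ dt + |Re(⟨Af,∂_t f⟩ + ⟨ψf,∂_t f⟩)|_{t=T₀}^{t=T₁}|. -/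
open scoped InnerProductSpace
open intervalIntegral

/-- Monotonicity (Carleman) estimate: for `S` symmetric, `A` skew-symmetric, `ψ` symmetric
bounded nonnegative, all time-independent, and `f : ℝ → H` of class `C²`, and `T₀ < T₁`,
`(1/2)∫⟨[S,A]f,f⟩ + ∫⟨ψ∂_tf,∂_tf⟩ + (1/2)∫‖Af‖² + Re∫⟨(S+A)f,ψf⟩
  ≤ ∫‖(∂²_t-(S+A))f‖² + (1/2)∫⟨ψ²f,f⟩ + |boundary|`. -/
theorem stmt5 {H : Type*} [NormedAddCommGroup H] [InnerProductSpace ℂ H] [CompleteSpace H]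
    (S A ψ : H →L[ℂ] H)
    (hS : ∀ x y : H, ⟪S x, y⟫_ℂ = ⟪x, S y⟫_ℂ)
    (hA : ∀ x y : H, ⟪A x, y⟫_ℂ = -⟪x, A y⟫_ℂ)
    (hψ : ∀ x y : H, ⟪ψ x, y⟫_ℂ = ⟪x, ψ y⟫_ℂ)
    (hψpos : ∀ v : H, 0 ≤ (⟪ψ v, v⟫_ℂ).re)
    (f : ℝ → H) (hf : ContDiff ℝ 2 f)
    (T₀ T₁ : ℝ) (hT : T₀ < T₁) :
    (1/2) * (∫ t in T₀..T₁, (⟪S (A (f t)) - A (S (f t)), f t⟫_ℂ).re)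
      + (∫ t in T₀..T₁, (⟪ψ (deriv f t), deriv f t⟫_ℂ).re)
      + (1/2) * (∫ t in T₀..T₁, ‖A (f t)‖ ^ 2)
      + (∫ t in T₀..T₁, (⟪S (f t) + A (f t), ψ (f t)⟫_ℂ).re)
    ≤ (∫ t in T₀..T₁, ‖deriv (deriv f) t - (S (f t) + A (f t))‖ ^ 2)
      + (1/2) * (∫ t in T₀..T₁, (⟪ψ (ψ (f t)), f t⟫_ℂ).re)
      + |((⟪A (f T₁), deriv f T₁⟫_ℂ + ⟪ψ (f T₁), deriv f T₁⟫_ℂ).re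
          - (⟪A (f T₀), deriv f T₀⟫_ℂ + ⟪ψ (f T₀), deriv f T₀⟫_ℂ).re)| := by
  -- regularity facts
  have hf' : ContDiff ℝ ((1 : ℕ) + 1) f := by exact_mod_cast hf
  have h1 : ContDiff ℝ 1 (deriv f) := (contDiff_succ_iff_deriv.mp (by exact_mod_cast hf')).2.2
  have hd1 : ∀ t, HasDerivAt f (deriv f t) t := fun t =>
    (hf.differentiable (by norm_num)).differentiableAt.hasDerivAt
  have hd2 : ∀ t, HasDerivAt (deriv f) (deriv (deriv f) t) t := fun t =>
    (h1.differentiable one_ne_zero).differentiableAt.hasDerivAt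
  have cf : Continuous f := hf.continuous
  have cf1 : Continuous (deriv f) := h1.continuous
  have cf2 : Continuous (deriv (deriv f)) := (contDiff_one_iff_deriv.mp h1).2
  -- algebraic helpers
  have hre : ∀ a b : H, (⟪a, b⟫_ℂ).re = (⟪b, a⟫_ℂ).re := fun a b => by
    rw [← inner_conj_symm]; exact Complex.conj_re _
  have eself : ∀ x : H, (⟪x, x⟫_ℂ).re = ‖x‖^2 := fun x => by
    simpa using inner_self_eq_norm_sq (𝕜 := ℂ) x
  have eskew : ∀ v : H, (⟪A v, v⟫_ℂ).re = 0 := fun v => by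
    have h := congrArg Complex.re (hA v v)
    have h2 := hre v (A v)
    simp only [Complex.neg_re] at h
    linarith
  -- derivative of the boundary term
  have hAc : ∀ t, HasDerivAt (fun t => A (f t)) (A (deriv f t)) t := fun t =>
    ((A.restrictScalars ℝ).hasFDerivAt).comp_hasDerivAt t (hd1 t)
  have hψc : ∀ t, HasDerivAt (fun t => ψ (f t)) (ψ (deriv f t)) t := fun t =>
    ((ψ.restrictScalars ℝ).hasFDerivAt).comp_hasDerivAt t (hd1 t)
  have hBc : ∀ t, HasDerivAt (fun t => ⟪A (f t), deriv f t⟫_ℂ + ⟪ψ (f t), deriv f t⟫_ℂ)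
      ((⟪A (f t), deriv (deriv f) t⟫_ℂ + ⟪A (deriv f t), deriv f t⟫_ℂ)
        + (⟪ψ (f t), deriv (deriv f) t⟫_ℂ + ⟪ψ (deriv f t), deriv f t⟫_ℂ)) t := fun t =>
    ((hAc t).inner ℂ (hd2 t)).add ((hψc t).inner ℂ (hd2 t))
  have hB : ∀ t, HasDerivAt (fun t => (⟪A (f t), deriv f t⟫_ℂ + ⟪ψ (f t), deriv f t⟫_ℂ).re)
      ((1/2) * (⟪S (A (f t)) - A (S (f t)), f t⟫_ℂ).re
        + (⟪ψ (deriv f t), deriv f t⟫_ℂ).re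
        + ‖A (f t)‖^2
        + (⟪S (f t) + A (f t), ψ (f t)⟫_ℂ).re
        + (⟪A (f t) + ψ (f t), deriv (deriv f) t - (S (f t) + A (f t))⟫_ℂ).re) t := by
    intro t
    have h : HasDerivAt (fun t => (⟪A (f t), deriv f t⟫_ℂ + ⟪ψ (f t), deriv f t⟫_ℂ).re)
        (((⟪A (f t), deriv (deriv f) t⟫_ℂ + ⟪A (deriv f t), deriv f t⟫_ℂ)
          + (⟪ψ (f t), deriv (deriv f) t⟫_ℂ + ⟪ψ (deriv f t), deriv f t⟫_ℂ)).re) t :=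
      Complex.reCLM.hasFDerivAt.comp_hasDerivAt t (hBc t)
    convert h using 1
    have e1 := eskew (deriv f t)
    have e2 := congrArg Complex.re (hS (A (f t)) (f t))
    have e3 := congrArg Complex.re (hA (S (f t)) (f t))
    have e4 := hre (S (f t)) (A (f t))
    have e5 := eself (A (f t))
    have e6 := hre (S (f t)) (ψ (f t))
    have e7 := hre (A (f t)) (ψ (f t))
    simp only [Complex.neg_re] at e3
    simp only [inner_sub_left, inner_add_left, inner_sub_right, inner_add_right,
      Complex.add_re, Complex.sub_re]
    linarith
  -- continuity of the integrands
  have cA : Continuous (fun t => A (f t)) := A.continuous.comp cf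
  have cS : Continuous (fun t => S (f t)) := S.continuous.comp cf
  have cψ : Continuous (fun t => ψ (f t)) := ψ.continuous.comp cf
  have cg : Continuous (fun t => deriv (deriv f) t - (S (f t) + A (f t))) :=
    cf2.sub (cS.add cA)
  have cre : ∀ {u v : ℝ → H}, Continuous u → Continuous v →
      Continuous (fun t => (⟪u t, v t⟫_ℂ).re) := fun hu hv =>
    Complex.continuous_re.comp (hu.inner hv)
  have c1 : Continuous (fun t => (⟪S (A (f t)) - A (S (f t)), f t⟫_ℂ).re) :=
    cre ((S.continuous.comp cA).sub (A.continuous.comp cS)) cf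
  have c2 : Continuous (fun t => (⟪ψ (deriv f t), deriv f t⟫_ℂ).re) :=
    cre (ψ.continuous.comp cf1) cf1
  have c3 : Continuous (fun t => ‖A (f t)‖^2) := (cA.norm).pow 2
  have c4 : Continuous (fun t => (⟪S (f t) + A (f t), ψ (f t)⟫_ℂ).re) :=
    cre (cS.add cA) cψ
  have c5 : Continuous (fun t =>
      (⟪A (f t) + ψ (f t), deriv (deriv f) t - (S (f t) + A (f t))⟫_ℂ).re) :=
    cre (cA.add cψ) cg
  have c6 : Continuous (fun t => ‖deriv (deriv f) t - (S (f t) + A (f t))‖^2) :=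
    (cg.norm).pow 2
  have c7 : Continuous (fun t => (⟪ψ (ψ (f t)), f t⟫_ℂ).re) :=
    cre (ψ.continuous.comp cψ) cf
  have i1 : IntervalIntegrable (fun t => (1/2 : ℝ) * (⟪S (A (f t)) - A (S (f t)), f t⟫_ℂ).re) MeasureTheory.volume T₀ T₁ := (continuous_const.mul c1).intervalIntegrable (μ := MeasureTheory.volume) T₀ T₁
  have i2 := c2.intervalIntegrable (μ := MeasureTheory.volume) T₀ T₁
  have i3 := c3.intervalIntegrable (μ := MeasureTheory.volume) T₀ T₁
  have i4 := c4.intervalIntegrable (μ := MeasureTheory.volume) T₀ T₁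
  have i5 := c5.intervalIntegrable (μ := MeasureTheory.volume) T₀ T₁
  -- FTC
  have hFTC : (∫ t in T₀..T₁,
        ((1/2) * (⟪S (A (f t)) - A (S (f t)), f t⟫_ℂ).re
        + (⟪ψ (deriv f t), deriv f t⟫_ℂ).re
        + ‖A (f t)‖^2
        + (⟪S (f t) + A (f t), ψ (f t)⟫_ℂ).re
        + (⟪A (f t) + ψ (f t), deriv (deriv f) t - (S (f t) + A (f t))⟫_ℂ).re))
      = (⟪A (f T₁), deriv f T₁⟫_ℂ + ⟪ψ (f T₁), deriv f T₁⟫_ℂ).re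
        - (⟪A (f T₀), deriv f T₀⟫_ℂ + ⟪ψ (f T₀), deriv f T₀⟫_ℂ).re := by
    exact integral_eq_sub_of_hasDerivAt (fun t _ => hB t)
      ((((((continuous_const.mul c1).add c2).add c3).add c4).add c5).intervalIntegrable (μ := MeasureTheory.volume) T₀ T₁)
  have hsplit : (∫ t in T₀..T₁,
        ((1/2) * (⟪S (A (f t)) - A (S (f t)), f t⟫_ℂ).re
        + (⟪ψ (deriv f t), deriv f t⟫_ℂ).re
        + ‖A (f t)‖^2
        + (⟪S (f t) + A (f t), ψ (f t)⟫_ℂ).re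
        + (⟪A (f t) + ψ (f t), deriv (deriv f) t - (S (f t) + A (f t))⟫_ℂ).re))
      = (1/2) * (∫ t in T₀..T₁, (⟪S (A (f t)) - A (S (f t)), f t⟫_ℂ).re)
        + (∫ t in T₀..T₁, (⟪ψ (deriv f t), deriv f t⟫_ℂ).re)
        + (∫ t in T₀..T₁, ‖A (f t)‖^2)
        + (∫ t in T₀..T₁, (⟪S (f t) + A (f t), ψ (f t)⟫_ℂ).re)
        + (∫ t in T₀..T₁,
            (⟪A (f t) + ψ (f t), deriv (deriv f) t - (S (f t) + A (f t))⟫_ℂ).re) := by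
    rw [integral_add (((i1.add i2).add i3).add i4) i5,
      integral_add ((i1.add i2).add i3) i4, integral_add (i1.add i2) i3,
      integral_add i1 i2, integral_const_mul]
  -- pointwise Cauchy-Schwarz bound for the cross term
  have hpt : ∀ t,
      -((⟪A (f t) + ψ (f t), deriv (deriv f) t - (S (f t) + A (f t))⟫_ℂ).re)
      ≤ ‖deriv (deriv f) t - (S (f t) + A (f t))‖^2
        + (1/2) * (⟪ψ (ψ (f t)), f t⟫_ℂ).re + (1/2) * ‖A (f t)‖^2 := by
    intro t
    set x := f t
    set w := deriv (deriv f) t - (S (f t) + A (f t)) with hw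
    have h1 : (⟪ψ (ψ x), x⟫_ℂ).re = ‖ψ x‖^2 := by
      rw [hψ (ψ x) x]; exact eself (ψ x)
    have ha : |(⟪A x + ψ x, w⟫_ℂ).re| ≤ ‖(⟪A x + ψ x, w⟫_ℂ)‖ := Complex.abs_re_le_norm _
    have hb : ‖(⟪A x + ψ x, w⟫_ℂ)‖ ≤ ‖A x + ψ x‖ * ‖w‖ := norm_inner_le_norm _ _
    have hc : ‖A x + ψ x‖ ≤ ‖A x‖ + ‖ψ x‖ := norm_add_le _ _
    rw [h1]
    nlinarith [sq_nonneg (‖A x‖ - ‖w‖), sq_nonneg (‖ψ x‖ - ‖w‖), norm_nonneg w,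
      neg_abs_le ((⟪A x + ψ x, w⟫_ℂ).re), abs_nonneg ((⟪A x + ψ x, w⟫_ℂ).re)]
  -- integrated bound
  have hbound : (∫ t in T₀..T₁,
        -((⟪A (f t) + ψ (f t), deriv (deriv f) t - (S (f t) + A (f t))⟫_ℂ).re))
      ≤ ∫ t in T₀..T₁,
        (‖deriv (deriv f) t - (S (f t) + A (f t))‖^2
          + (1/2) * (⟪ψ (ψ (f t)), f t⟫_ℂ).re + (1/2) * ‖A (f t)‖^2) :=
    integral_mono_on hT.le (c5.neg.intervalIntegrable (μ := MeasureTheory.volume) T₀ T₁)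
      (((c6.add (continuous_const.mul c7)).add (continuous_const.mul c3)).intervalIntegrable (μ := MeasureTheory.volume) T₀ T₁)
      (fun t _ => hpt t)
  have c7' : Continuous (fun t => (1/2 : ℝ) * (⟪ψ (ψ (f t)), f t⟫_ℂ).re) := continuous_const.mul c7
  have c3' : Continuous (fun t => (1/2 : ℝ) * ‖A (f t)‖^2) := continuous_const.mul c3
  rw [integral_neg, integral_add ((c6.intervalIntegrable (μ := MeasureTheory.volume) T₀ T₁).add
      (c7'.intervalIntegrable (μ := MeasureTheory.volume) T₀ T₁))
      (c3'.intervalIntegrable (μ := MeasureTheory.volume) T₀ T₁),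
    integral_add (c6.intervalIntegrable (μ := MeasureTheory.volume) T₀ T₁)
      (c7'.intervalIntegrable (μ := MeasureTheory.volume) T₀ T₁),
    integral_const_mul, integral_const_mul] at hbound
  have habs := le_abs_self
    ((⟪A (f T₁), deriv f T₁⟫_ℂ + ⟪ψ (f T₁), deriv f T₁⟫_ℂ).re
      - (⟪A (f T₀), deriv f T₀⟫_ℂ + ⟪ψ (f T₀), deriv f T₀⟫_ℂ).re)
  rw [hsplit] at hFTC
  linarith
end

section
/- There exist real constants a₁,…,a₅ such that the radial function φ(r) = a₁r² + a₂r⁴ + a₃r⁶ + a₄r⁸ for 0 ≤ r ≤ 1 and φ(r) = 3r - ∫₁^r ds/(1+log s) + a₅ for r > 1 defines a C⁴ function on ℝⁿ (as x ↦ φ(|x|)) which is strictly convex on compact sets, satisfies φ(0) = 0, φ(r) > 0 for r > 0, and φ(r) ≤ Mr for all r ≥ 0 and some M > 0. -/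
open Real Set ContinuousLinearMap
open scoped RealInnerProductSpace

noncomputable section Stmt11Aux

def pa1 : ℝ := 103/96
def pa2 : ℝ := 9/64
def pa3 : ℝ := -17/96
def pa4 : ℝ := 17/384
def pa5 : ℝ := -737/384

def pP (r : ℝ) : ℝ := pa1 * r ^ 2 + pa2 * r ^ 4 + pa3 * r ^ 6 + pa4 * r ^ 8
def pP1 (r : ℝ) : ℝ := 2*pa1*r + 4*pa2*r^3 + 6*pa3*r^5 + 8*pa4*r^7
def pP2 (r : ℝ) : ℝ := 2*pa1 + 12*pa2*r^2 + 30*pa3*r^4 + 56*pa4*r^6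
def pP3 (r : ℝ) : ℝ := 24*pa2*r + 120*pa3*r^3 + 336*pa4*r^5
def pP4 (r : ℝ) : ℝ := 24*pa2 + 360*pa3*r^2 + 1680*pa4*r^4

def psi0 (r : ℝ) : ℝ := 3*r - (∫ s in (1:ℝ)..r, 1/(1 + Real.log s)) + pa5
def psi1 (r : ℝ) : ℝ := 3 - (1 + Real.log r)⁻¹
def psi2 (r : ℝ) : ℝ := r⁻¹ * ((1 + Real.log r)⁻¹)^2
def psi3 (r : ℝ) : ℝ :=
  -((r⁻¹)^2 * ((1 + Real.log r)⁻¹)^2) - 2*((r⁻¹)^2 * ((1 + Real.log r)⁻¹)^3)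
def psi4 (r : ℝ) : ℝ :=
  2*((r⁻¹)^3 * ((1 + Real.log r)⁻¹)^2) + 6*((r⁻¹)^3 * ((1 + Real.log r)⁻¹)^3)
    + 6*((r⁻¹)^3 * ((1 + Real.log r)⁻¹)^4)

def hg0 (r : ℝ) : ℝ := if r ≤ 1 then pP r else psi0 r
def hg1 (r : ℝ) : ℝ := if r ≤ 1 then pP1 r else psi1 r
def hg2 (r : ℝ) : ℝ := if r ≤ 1 then pP2 r else psi2 r
def hg3 (r : ℝ) : ℝ := if r ≤ 1 then pP3 r else psi3 r
def hg4 (r : ℝ) : ℝ := if r ≤ 1 then pP4 r else psi4 r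

lemma rU_pos {r : ℝ} (hr : r ∈ Ioi (1/2 : ℝ)) : 0 < r := lt_trans (by norm_num) hr

lemma L_pos {r : ℝ} (hr : r ∈ Ioi (1/2 : ℝ)) : 0 < 1 + Real.log r := by
  have h1 : Real.log (1/2) ≤ Real.log r := Real.log_le_log (by norm_num) (le_of_lt hr)
  have h2 : Real.log (1/2) = -Real.log 2 := by
    rw [one_div, Real.log_inv]
  have := Real.log_two_lt_d9
  linarith

lemma hasDerivAt_pP (r : ℝ) : HasDerivAt pP (pP1 r) r := by
  have h : HasDerivAt (fun r : ℝ => pa1 * r ^ 2 + pa2 * r ^ 4 + pa3 * r ^ 6 + pa4 * r ^ 8)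
      (pa1 * (2 * r ^ 1) + pa2 * (4 * r ^ 3) + pa3 * (6 * r ^ 5) + pa4 * (8 * r ^ 7)) r := by
    exact ((((hasDerivAt_pow 2 r).const_mul pa1).add ((hasDerivAt_pow 4 r).const_mul pa2)).add
      ((hasDerivAt_pow 6 r).const_mul pa3)).add ((hasDerivAt_pow 8 r).const_mul pa4)
  have he : pP1 r = pa1 * (2 * r ^ 1) + pa2 * (4 * r ^ 3) + pa3 * (6 * r ^ 5) + pa4 * (8 * r ^ 7) := by
    unfold pP1; ring
  rw [he]; exact h

lemma hasDerivAt_pP1 (r : ℝ) : HasDerivAt pP1 (pP2 r) r := by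
  have h : HasDerivAt (fun r : ℝ => 2*pa1*r + 4*pa2*r^3 + 6*pa3*r^5 + 8*pa4*r^7)
      ((2*pa1) * 1 + (4*pa2) * (3 * r ^ 2) + (6*pa3) * (5 * r ^ 4) + (8*pa4) * (7 * r ^ 6)) r := by
    exact ((((hasDerivAt_id r).const_mul (2*pa1)).add ((hasDerivAt_pow 3 r).const_mul (4*pa2))).add
      ((hasDerivAt_pow 5 r).const_mul (6*pa3))).add ((hasDerivAt_pow 7 r).const_mul (8*pa4))
  have he : pP2 r = (2*pa1) * 1 + (4*pa2) * (3 * r ^ 2) + (6*pa3) * (5 * r ^ 4) + (8*pa4) * (7 * r ^ 6) := by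
    unfold pP2; ring
  rw [he]; exact h

lemma hasDerivAt_pP2 (r : ℝ) : HasDerivAt pP2 (pP3 r) r := by
  have h : HasDerivAt (fun r : ℝ => 2*pa1 + 12*pa2*r^2 + 30*pa3*r^4 + 56*pa4*r^6)
      (0 + (12*pa2) * (2 * r ^ 1) + (30*pa3) * (4 * r ^ 3) + (56*pa4) * (6 * r ^ 5)) r := by
    exact (((hasDerivAt_const r (2*pa1)).add ((hasDerivAt_pow 2 r).const_mul (12*pa2))).add
      ((hasDerivAt_pow 4 r).const_mul (30*pa3))).add ((hasDerivAt_pow 6 r).const_mul (56*pa4))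
  have he : pP3 r = 0 + (12*pa2) * (2 * r ^ 1) + (30*pa3) * (4 * r ^ 3) + (56*pa4) * (6 * r ^ 5) := by
    unfold pP3; ring
  rw [he]; exact h

lemma hasDerivAt_pP3 (r : ℝ) : HasDerivAt pP3 (pP4 r) r := by
  have h : HasDerivAt (fun r : ℝ => 24*pa2*r + 120*pa3*r^3 + 336*pa4*r^5)
      ((24*pa2) * 1 + (120*pa3) * (3 * r ^ 2) + (336*pa4) * (5 * r ^ 4)) r := by
    exact (((hasDerivAt_id r).const_mul (24*pa2)).add ((hasDerivAt_pow 3 r).const_mul (120*pa3))).add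
      ((hasDerivAt_pow 5 r).const_mul (336*pa4))
  have he : pP4 r = (24*pa2) * 1 + (120*pa3) * (3 * r ^ 2) + (336*pa4) * (5 * r ^ 4) := by
    unfold pP4; ring
  rw [he]; exact h

lemma continuousOn_integrand :
    ContinuousOn (fun s : ℝ => 1/(1 + Real.log s)) (Ioi (1/2 : ℝ)) := by
  intro s hs
  refine (ContinuousAt.continuousWithinAt ?_)
  exact continuousAt_const.div
    (continuousAt_const.add (Real.continuousAt_log (ne_of_gt (rU_pos hs))))
    (ne_of_gt (L_pos hs))

lemma integrand_intervalIntegrable {r : ℝ} (hr : r ∈ Ioi (1/2 : ℝ)) :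
    IntervalIntegrable (fun s : ℝ => 1/(1 + Real.log s)) MeasureTheory.volume 1 r := by
  have hsub : uIcc (1:ℝ) r ⊆ Ioi (1/2 : ℝ) := by
    intro s hs
    rw [Set.mem_uIcc] at hs
    rw [Set.mem_Ioi] at hr ⊢
    rcases hs with ⟨h1, _⟩ | ⟨h1, _⟩ <;> linarith
  exact (continuousOn_integrand.mono hsub).intervalIntegrable

lemma hasDerivAt_psi0 {r : ℝ} (hr : r ∈ Ioi (1/2 : ℝ)) : HasDerivAt psi0 (psi1 r) r := by
  have hmeas : StronglyMeasurableAtFilter (fun s : ℝ => 1/(1 + Real.log s)) (nhds r) :=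
    continuousOn_integrand.stronglyMeasurableAtFilter isOpen_Ioi r hr
  have hI : HasDerivAt (fun u : ℝ => ∫ s in (1:ℝ)..u, 1/(1 + Real.log s))
      (1/(1 + Real.log r)) r :=
    intervalIntegral.integral_hasDerivAt_right (integrand_intervalIntegrable hr) hmeas
      ((continuousOn_integrand r hr).continuousAt (isOpen_Ioi.mem_nhds hr))
  have h : HasDerivAt psi0 (3 * 1 - 1/(1 + Real.log r) + 0) r := by
    unfold psi0
    exact (((hasDerivAt_id r).const_mul 3).sub hI).add (hasDerivAt_const r pa5)
  convert h using 1
  unfold psi1; rw [one_div]; ring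

lemma hasDerivAt_L {r : ℝ} (hr : r ∈ Ioi (1/2 : ℝ)) :
    HasDerivAt (fun s : ℝ => 1 + Real.log s) r⁻¹ r :=
  (Real.hasDerivAt_log (ne_of_gt (rU_pos hr))).const_add 1

lemma hasDerivAt_Linv {r : ℝ} (hr : r ∈ Ioi (1/2 : ℝ)) :
    HasDerivAt (fun s : ℝ => (1 + Real.log s)⁻¹)
      (-r⁻¹ / (1 + Real.log r)^2) r :=
  (hasDerivAt_L hr).inv (ne_of_gt (L_pos hr))

lemma hasDerivAt_psi1 {r : ℝ} (hr : r ∈ Ioi (1/2 : ℝ)) : HasDerivAt psi1 (psi2 r) r := by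
  have h : HasDerivAt psi1 (0 - (-r⁻¹ / (1 + Real.log r)^2)) r := by
    unfold psi1
    exact (hasDerivAt_const r 3).sub (hasDerivAt_Linv hr)
  convert h using 1
  unfold psi2
  have h1 := ne_of_gt (rU_pos hr)
  have h2 := ne_of_gt (L_pos hr)
  field_simp
  ring

lemma hasDerivAt_rinv {r : ℝ} (hr : r ∈ Ioi (1/2 : ℝ)) :
    HasDerivAt (fun s : ℝ => s⁻¹) (-(r^2)⁻¹) r := hasDerivAt_inv (ne_of_gt (rU_pos hr))

lemma hasDerivAt_psi2 {r : ℝ} (hr : r ∈ Ioi (1/2 : ℝ)) : HasDerivAt psi2 (psi3 r) r := by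
  have hsq : HasDerivAt (fun s : ℝ => ((1 + Real.log s)⁻¹)^2)
      (2 * ((1 + Real.log r)⁻¹)^1 * (-r⁻¹ / (1 + Real.log r)^2)) r :=
    (hasDerivAt_Linv hr).pow 2
  have h := (hasDerivAt_rinv hr).mul hsq
  have he : psi3 r = -(r^2)⁻¹ * ((1 + Real.log r)⁻¹)^2
      + r⁻¹ * (2 * ((1 + Real.log r)⁻¹)^1 * (-r⁻¹ / (1 + Real.log r)^2)) := by
    unfold psi3
    have h1 := ne_of_gt (rU_pos hr)
    have h2 := ne_of_gt (L_pos hr)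
    field_simp
    ring
  rw [he]
  exact h

lemma hasDerivAt_psi3 {r : ℝ} (hr : r ∈ Ioi (1/2 : ℝ)) : HasDerivAt psi3 (psi4 r) r := by
  have h1 := ne_of_gt (rU_pos hr)
  have h2 := ne_of_gt (L_pos hr)
  have hrsq : HasDerivAt (fun s : ℝ => (s⁻¹)^2) (2 * (r⁻¹)^1 * (-(r^2)⁻¹)) r :=
    (hasDerivAt_rinv hr).pow 2
  have hL2 : HasDerivAt (fun s : ℝ => ((1 + Real.log s)⁻¹)^2)
      (2 * ((1 + Real.log r)⁻¹)^1 * (-r⁻¹ / (1 + Real.log r)^2)) r :=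
    (hasDerivAt_Linv hr).pow 2
  have hL3 : HasDerivAt (fun s : ℝ => ((1 + Real.log s)⁻¹)^3)
      (3 * ((1 + Real.log r)⁻¹)^2 * (-r⁻¹ / (1 + Real.log r)^2)) r :=
    (hasDerivAt_Linv hr).pow 3
  have h := ((hrsq.mul hL2).neg).sub ((hrsq.mul hL3).const_mul 2)
  have he : psi4 r = -((2 * (r⁻¹)^1 * (-(r^2)⁻¹)) * ((1 + Real.log r)⁻¹)^2
        + (r⁻¹)^2 * (2 * ((1 + Real.log r)⁻¹)^1 * (-r⁻¹ / (1 + Real.log r)^2)))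
      - 2 * ((2 * (r⁻¹)^1 * (-(r^2)⁻¹)) * ((1 + Real.log r)⁻¹)^3
        + (r⁻¹)^2 * (3 * ((1 + Real.log r)⁻¹)^2 * (-r⁻¹ / (1 + Real.log r)^2))) := by
    unfold psi4
    field_simp
    ring
  rw [he]
  exact h

lemma junction0 : pP 1 = psi0 1 := by
  unfold pP psi0
  rw [intervalIntegral.integral_same]
  unfold pa1 pa2 pa3 pa4 pa5; norm_num

lemma junction1 : pP1 1 = psi1 1 := by
  unfold pP1 psi1
  rw [Real.log_one]
  unfold pa1 pa2 pa3 pa4; norm_num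

lemma junction2 : pP2 1 = psi2 1 := by
  unfold pP2 psi2
  rw [Real.log_one]
  unfold pa1 pa2 pa3 pa4; norm_num

lemma junction3 : pP3 1 = psi3 1 := by
  unfold pP3 psi3
  rw [Real.log_one]
  unfold pa2 pa3 pa4; norm_num

lemma junction4 : pP4 1 = psi4 1 := by
  unfold pP4 psi4
  rw [Real.log_one]
  unfold pa2 pa3 pa4; norm_num

/-- generic gluing of `HasDerivAt` across the point `1`. -/
lemma glue_hasDerivAt {A B dA dB : ℝ → ℝ}
    (hA : ∀ r ∈ Ioi (1/2:ℝ), HasDerivAt A (dA r) r)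
    (hB : ∀ r ∈ Ioi (1/2:ℝ), HasDerivAt B (dB r) r)
    (hval : A 1 = B 1) (hder : dA 1 = dB 1)
    {r : ℝ} (hr : r ∈ Ioi (1/2:ℝ)) :
    HasDerivAt (fun s => if s ≤ 1 then A s else B s)
      (if r ≤ 1 then dA r else dB r) r := by
  rcases lt_trichotomy r 1 with h | h | h
  · rw [if_pos h.le]
    refine (hA r hr).congr_of_eventuallyEq ?_
    filter_upwards [Iio_mem_nhds h] with s hs
    rw [if_pos (le_of_lt hs)]
  · subst h
    rw [if_pos le_rfl]
    have hIic : HasDerivWithinAt (fun s => if s ≤ 1 then A s else B s) (dA 1) (Iic 1) 1 := by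
      refine ((hA 1 hr).hasDerivWithinAt).congr (fun s hs => ?_) ?_
      · rw [if_pos (mem_Iic.mp hs)]
      · rw [if_pos le_rfl]
    have hIci : HasDerivWithinAt (fun s => if s ≤ 1 then A s else B s) (dA 1) (Ici 1) 1 := by
      rw [hder]
      refine ((hB 1 hr).hasDerivWithinAt).congr (fun s hs => ?_) ?_
      · rcases eq_or_lt_of_le (mem_Ici.mp hs) with h | h
        · rw [← h, if_pos le_rfl, hval]
        · rw [if_neg (not_le.mpr h)]
      · rw [if_pos le_rfl, hval]
    have := hIic.union hIci
    rw [Iic_union_Ici] at this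
    exact this.hasDerivAt (by simp)
  · rw [if_neg (not_le.mpr h)]
    refine (hB r hr).congr_of_eventuallyEq ?_
    filter_upwards [Ioi_mem_nhds h] with s hs
    rw [if_neg (not_le.mpr hs)]

/-- generic gluing of continuity across the point `1`. -/
lemma glue_continuousOn {A B : ℝ → ℝ}
    (hA : ∀ r ∈ Ioi (1/2:ℝ), ContinuousAt A r)
    (hB : ∀ r ∈ Ioi (1/2:ℝ), ContinuousAt B r)
    (hval : A 1 = B 1) :
    ContinuousOn (fun s => if s ≤ 1 then A s else B s) (Ioi (1/2:ℝ)) := by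
  intro r hr
  rcases lt_trichotomy r 1 with h | h | h
  · refine ((hA r hr).congr ?_).continuousWithinAt
    filter_upwards [Iio_mem_nhds h] with s hs
    rw [if_pos (le_of_lt hs)]
  · subst h
    have hIic : ContinuousWithinAt (fun s => if s ≤ 1 then A s else B s) (Iic 1) 1 := by
      refine ((hA 1 hr).continuousWithinAt).congr (fun s hs => ?_) ?_
      · rw [if_pos (mem_Iic.mp hs)]
      · rw [if_pos le_rfl]
    have hIci : ContinuousWithinAt (fun s => if s ≤ 1 then A s else B s) (Ici 1) 1 := by
      refine ((hB 1 hr).continuousWithinAt).congr (fun s hs => ?_) ?_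
      · rcases eq_or_lt_of_le (mem_Ici.mp hs) with h | h
        · rw [← h, if_pos le_rfl, hval]
        · rw [if_neg (not_le.mpr h)]
      · rw [if_pos le_rfl, hval]
    have := hIic.union hIci
    rw [Iic_union_Ici] at this
    exact (continuousWithinAt_univ _ _).mp this |>.continuousWithinAt
  · refine ((hB r hr).congr ?_).continuousWithinAt
    filter_upwards [Ioi_mem_nhds h] with s hs
    rw [if_neg (not_le.mpr hs)]

lemma hasDerivAt_hg0 {r : ℝ} (hr : r ∈ Ioi (1/2:ℝ)) : HasDerivAt hg0 (hg1 r) r :=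
  glue_hasDerivAt (fun r _ => hasDerivAt_pP r) (fun r hr => hasDerivAt_psi0 hr)
    junction0 junction1 hr

lemma hasDerivAt_hg1 {r : ℝ} (hr : r ∈ Ioi (1/2:ℝ)) : HasDerivAt hg1 (hg2 r) r :=
  glue_hasDerivAt (fun r _ => hasDerivAt_pP1 r) (fun r hr => hasDerivAt_psi1 hr)
    junction1 junction2 hr

lemma hasDerivAt_hg2 {r : ℝ} (hr : r ∈ Ioi (1/2:ℝ)) : HasDerivAt hg2 (hg3 r) r :=
  glue_hasDerivAt (fun r _ => hasDerivAt_pP2 r) (fun r hr => hasDerivAt_psi2 hr)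
    junction2 junction3 hr

lemma hasDerivAt_hg3 {r : ℝ} (hr : r ∈ Ioi (1/2:ℝ)) : HasDerivAt hg3 (hg4 r) r :=
  glue_hasDerivAt (fun r _ => hasDerivAt_pP3 r) (fun r hr => hasDerivAt_psi3 hr)
    junction3 junction4 hr

lemma continuousOn_hg4 : ContinuousOn hg4 (Ioi (1/2:ℝ)) := by
  refine glue_continuousOn (fun r _ => ?_) (fun r hr => ?_) junction4
  · unfold pP4; fun_prop
  · have h1 := ne_of_gt (rU_pos hr)
    have h2 := ne_of_gt (L_pos hr)
    have hri : ContinuousAt (fun s : ℝ => s⁻¹) r := continuousAt_inv₀ h1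
    have hLi : ContinuousAt (fun s : ℝ => (1 + Real.log s)⁻¹) r :=
      (continuousAt_const.add (Real.continuousAt_log h1)).inv₀ h2
    unfold psi4
    exact ((((hri.pow 3).mul (hLi.pow 2)).const_mul 2).add
      (((hri.pow 3).mul (hLi.pow 3)).const_mul 6)).add
      (((hri.pow 3).mul (hLi.pow 4)).const_mul 6)

/-- induction step for `ContDiffOn` on the open set. -/
lemma contDiffOn_step {F DF : ℝ → ℝ} {m : ℕ}
    (hd : ∀ r ∈ Ioi (1/2:ℝ), HasDerivAt F (DF r) r)
    (hc : ContDiffOn ℝ m DF (Ioi (1/2:ℝ))) :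
    ContDiffOn ℝ (m+1 : ℕ) F (Ioi (1/2:ℝ)) := by
  have he : ((m+1 : ℕ) : WithTop ℕ∞) = (m : WithTop ℕ∞) + 1 := by push_cast; rfl
  rw [he, contDiffOn_succ_iff_deriv_of_isOpen isOpen_Ioi]
  refine ⟨fun r hr => (hd r hr).differentiableAt.differentiableWithinAt, ?_, ?_⟩
  · intro h; exact absurd h (by simp)
  · exact hc.congr fun r hr => (hd r hr).deriv

lemma contDiffOn_hg0 : ContDiffOn ℝ ((4:ℕ) : WithTop ℕ∞) hg0 (Ioi (1/2:ℝ)) := by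
  have c0 : ContDiffOn ℝ ((0:ℕ) : WithTop ℕ∞) hg4 (Ioi (1/2:ℝ)) := by
    rw [show ((0:ℕ) : WithTop ℕ∞) = 0 from rfl, contDiffOn_zero]
    exact continuousOn_hg4
  exact contDiffOn_step (fun r hr => hasDerivAt_hg0 hr)
    (contDiffOn_step (fun r hr => hasDerivAt_hg1 hr)
      (contDiffOn_step (fun r hr => hasDerivAt_hg2 hr)
        (contDiffOn_step (fun r hr => hasDerivAt_hg3 hr) c0)))

end Stmt11Aux

noncomputable section Stmt11Aux2


def Q0 (t : ℝ) : ℝ := pa1*t + pa2*t^2 + pa3*t^3 + pa4*t^4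
def QA (t : ℝ) : ℝ := pa1 + 2*pa2*t + 3*pa3*t^2 + 4*pa4*t^3
def QB (t : ℝ) : ℝ := 2*pa2 + 6*pa3*t + 12*pa4*t^2

lemma hasDerivAt_Q0 (t : ℝ) : HasDerivAt Q0 (QA t) t := by
  have h : HasDerivAt (fun t : ℝ => pa1*t + pa2*t^2 + pa3*t^3 + pa4*t^4)
      (pa1 * 1 + pa2 * (2 * t ^ 1) + pa3 * (3 * t ^ 2) + pa4 * (4 * t ^ 3)) t := by
    exact ((((hasDerivAt_id t).const_mul pa1).add ((hasDerivAt_pow 2 t).const_mul pa2)).add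
      ((hasDerivAt_pow 3 t).const_mul pa3)).add ((hasDerivAt_pow 4 t).const_mul pa4)
  have he : QA t = pa1 * 1 + pa2 * (2 * t ^ 1) + pa3 * (3 * t ^ 2) + pa4 * (4 * t ^ 3) := by
    unfold QA; ring
  rw [he]; exact h

lemma hasDerivAt_QA (t : ℝ) : HasDerivAt QA (QB t) t := by
  have h : HasDerivAt (fun t : ℝ => pa1 + 2*pa2*t + 3*pa3*t^2 + 4*pa4*t^3)
      (0 + (2*pa2) * 1 + (3*pa3) * (2 * t ^ 1) + (4*pa4) * (3 * t ^ 2)) t := by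
    exact (((hasDerivAt_const t pa1).add ((hasDerivAt_id t).const_mul (2*pa2))).add
      ((hasDerivAt_pow 2 t).const_mul (3*pa3))).add ((hasDerivAt_pow 3 t).const_mul (4*pa4))
  have he : QB t = 0 + (2*pa2) * 1 + (3*pa3) * (2 * t ^ 1) + (4*pa4) * (3 * t ^ 2) := by
    unfold QB; ring
  rw [he]; exact h

lemma QA_pos {t : ℝ} (ht0 : 0 ≤ t) (ht1 : t ≤ 1) : 0 < QA t := by
  unfold QA pa1 pa2 pa3 pa4
  nlinarith [mul_nonneg ht0 ht0, mul_nonneg (mul_nonneg ht0 ht0) ht0,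
    mul_nonneg ht0 (sub_nonneg.2 ht1), sq_nonneg (1-t)]

lemma QB_sum_pos {t : ℝ} (ht0 : 0 ≤ t) (ht1 : t ≤ 1) : 0 < QA t + 2 * QB t * t := by
  unfold QA QB pa1 pa2 pa3 pa4
  nlinarith [mul_nonneg ht0 (sub_nonneg.2 ht1), mul_nonneg (mul_nonneg ht0 ht0) (sub_nonneg.2 ht1),
    mul_nonneg (mul_nonneg ht0 ht0) ht0, sq_nonneg (1-t)]

lemma psi1_ge_two {r : ℝ} (hr : 1 ≤ r) : 2 ≤ psi1 r := by
  unfold psi1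
  have hL1 : 1 ≤ 1 + Real.log r := by linarith [Real.log_nonneg hr]
  have h2 : (1 + Real.log r)⁻¹ ≤ 1 := by
    rw [inv_eq_one_div, div_le_one (by linarith)]; exact hL1
  linarith

lemma psi2_pos {r : ℝ} (hr : 1 ≤ r) : 0 < psi2 r := by
  have hr0 : (0:ℝ) < r := lt_of_lt_of_le one_pos hr
  have hL : 0 < 1 + Real.log r := by linarith [Real.log_nonneg hr]
  unfold psi2
  exact mul_pos (inv_pos.mpr hr0) (pow_pos (inv_pos.mpr hL) 2)

def UO (t : ℝ) : ℝ := psi1 (Real.sqrt t) * (Real.sqrt t)⁻¹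
def PsiSq (t : ℝ) : ℝ := psi0 (Real.sqrt t)

lemma outer_sum {r : ℝ} (hr : 1 < r) :
    psi1 r * r⁻¹ + 2*((psi2 r * r⁻¹ + psi1 r * (-(r^2)⁻¹)) * (1/(2*r)))*r^2 = psi2 r := by
  have h0 : r ≠ 0 := by positivity
  field_simp
  ring

end Stmt11Aux2

noncomputable section Stmt11Aux3
variable {E : Type*} [NormedAddCommGroup E] [InnerProductSpace ℝ E] [CompleteSpace E]

lemma hasGradientAt_radial {Q : ℝ → ℝ} {d : ℝ} (x : E) (hQ : HasDerivAt Q d (‖x‖^2)) :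
    HasGradientAt (fun y => Q (‖y‖^2)) ((2*d) • x) x := by
  have h2 : HasFDerivAt (fun y : E => Q (‖y‖^2)) (d • (2 • (innerSL ℝ x))) x :=
    hQ.comp_hasFDerivAt x (hasStrictFDerivAt_norm_sq x).hasFDerivAt
  rw [hasGradientAt_iff_hasFDerivAt]
  refine h2.congr_fderiv ?_
  ext v
  simp only [InnerProductSpace.toDual_apply_apply, ContinuousLinearMap.smul_apply,
    innerSL_apply_apply, smul_eq_mul]
  rw [real_inner_smul_left]
  ring

omit [CompleteSpace E] in
lemma hasFDerivAt_radial_smul {c : ℝ → ℝ} {d : ℝ} (x : E) (hc : HasDerivAt c d (‖x‖^2)) :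
    HasFDerivAt (fun y : E => c (‖y‖^2) • y)
      ((c (‖x‖^2)) • ContinuousLinearMap.id ℝ E + (d • (2 • (innerSL ℝ x))).smulRight x) x := by
  have hC : HasFDerivAt (fun y : E => c (‖y‖^2)) (d • (2 • (innerSL ℝ x))) x :=
    hc.comp_hasFDerivAt x (hasStrictFDerivAt_norm_sq x).hasFDerivAt
  exact hC.smul (hasFDerivAt_id x)

omit [CompleteSpace E] in
lemma quad_eval (ct d : ℝ) (x v : E) :
    ⟪(ct • ContinuousLinearMap.id ℝ E + (d • (2 • (innerSL ℝ x))).smulRight x) v, v⟫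
      = ct * ‖v‖^2 + 2*d * (⟪x,v⟫ * ⟪x,v⟫) := by
  simp only [ContinuousLinearMap.add_apply, ContinuousLinearMap.smul_apply,
    ContinuousLinearMap.smulRight_apply, ContinuousLinearMap.id_apply, innerSL_apply_apply,
    smul_eq_mul]
  rw [inner_add_left, real_inner_smul_left, real_inner_smul_left,
    real_inner_self_eq_norm_sq]
  ring

omit [CompleteSpace E] in
lemma quad_pos {ct d : ℝ} {x v : E} (hv : v ≠ 0) (h1 : 0 < ct)
    (h2 : 0 < ct + 2*d*‖x‖^2) :
    0 < ct * ‖v‖^2 + 2*d * (⟪x,v⟫ * ⟪x,v⟫) := by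
  have hv2 : 0 < ‖v‖^2 := by have := norm_pos_iff.mpr hv; positivity
  have hCS : ⟪x,v⟫ * ⟪x,v⟫ ≤ ‖x‖^2 * ‖v‖^2 := by
    have := real_inner_mul_inner_self_le x v
    rwa [real_inner_self_eq_norm_sq, real_inner_self_eq_norm_sq] at this
  have hsq : 0 ≤ ⟪x,v⟫ * ⟪x,v⟫ := mul_self_nonneg _
  rcases le_or_gt 0 d with hd | hd
  · nlinarith
  · nlinarith

end Stmt11Aux3

/-- There exist constants `a₁,…,a₅` such that the radial function
`φ(r) = a₁r² + a₂r⁴ + a₃r⁶ + a₄r⁸` on `[0,1]` and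
`φ(r) = 3r - ∫₁^r ds/(1+log s) + a₅` for `r > 1` defines a `C⁴` function `x ↦ φ(|x|)`
on `ℝⁿ`, strictly convex (positive definite Hessian everywhere, hence on every compact
set), with `φ(0) = 0`, `φ(r) > 0` for `r > 0` and `φ(r) ≤ Mr` for some `M > 0`. -/
theorem stmt11 (n : ℕ) :
    ∃ a₁ a₂ a₃ a₄ a₅ : ℝ, ∃ M : ℝ, 0 < M ∧
      ∀ g : ℝ → ℝ,
        (∀ r : ℝ, 0 ≤ r → r ≤ 1 → g r = a₁ * r ^ 2 + a₂ * r ^ 4 + a₃ * r ^ 6 + a₄ * r ^ 8) →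
        (∀ r : ℝ, 1 < r →
          g r = 3 * r - (∫ s in (1:ℝ)..r, 1 / (1 + Real.log s)) + a₅) →
        (ContDiff ℝ 4 (fun x : EuclideanSpace ℝ (Fin n) => g ‖x‖)
          ∧ g 0 = 0
          ∧ (∀ r : ℝ, 0 < r → 0 < g r)
          ∧ (∀ r : ℝ, 0 ≤ r → g r ≤ M * r)
          ∧ ∀ x v : EuclideanSpace ℝ (Fin n), v ≠ 0 →
              0 < ⟪fderiv ℝ (gradient (fun y : EuclideanSpace ℝ (Fin n) => g ‖y‖)) x v, v⟫) := by
  refine ⟨pa1, pa2, pa3, pa4, pa5, 3, by norm_num, ?_⟩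
  intro g hin hout
  have hgC : ContDiffOn ℝ 4 hg0 (Ioi (1/2:ℝ)) := by exact_mod_cast contDiffOn_hg0
  have hg_eq_hg0 : ∀ r : ℝ, 1/2 < r → g r = hg0 r := by
    intro r hr
    by_cases h : r ≤ 1
    · rw [hin r (by linarith) h]
      unfold hg0 pP
      rw [if_pos h]
    · push_neg at h
      rw [hout r h]
      unfold hg0 psi0
      rw [if_neg (not_le.mpr h)]
  have hgQ : ∀ y : EuclideanSpace ℝ (Fin n), ‖y‖ ≤ 1 → g ‖y‖ = Q0 (‖y‖^2) := by
    intro y hy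
    rw [hin ‖y‖ (norm_nonneg y) hy]
    unfold Q0; ring
  -- C1 : smoothness
  have hC4 : ContDiff ℝ 4 (fun x : EuclideanSpace ℝ (Fin n) => g ‖x‖) := by
    rw [contDiff_iff_contDiffAt]
    intro x
    rcases lt_or_ge ‖x‖ 1 with hx | hx
    · have hball : Metric.ball (0 : EuclideanSpace ℝ (Fin n)) 1 ∈ nhds x :=
        Metric.isOpen_ball.mem_nhds (mem_ball_zero_iff.mpr hx)
      have hQC : ContDiff ℝ 4 (fun y : EuclideanSpace ℝ (Fin n) => Q0 (‖y‖^2)) := by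
        have h1 : ContDiff ℝ 4 Q0 := by unfold Q0; fun_prop
        exact h1.comp (contDiff_norm_sq ℝ)
      refine hQC.contDiffAt.congr_of_eventuallyEq ?_
      filter_upwards [hball] with y hy
      exact hgQ y (le_of_lt (mem_ball_zero_iff.mp hy))
    · have hx2 : (1/2:ℝ) < ‖x‖ := by linarith
      have hx0 : x ≠ 0 := by
        intro h; rw [h, norm_zero] at hx; linarith
      have hU : IsOpen {y : EuclideanSpace ℝ (Fin n) | 1/2 < ‖y‖} :=
        isOpen_lt continuous_const continuous_norm
      have h1 : ContDiffAt ℝ 4 hg0 ‖x‖ := hgC.contDiffAt (isOpen_Ioi.mem_nhds hx2)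
      have h2 : ContDiffAt ℝ 4 (fun y : EuclideanSpace ℝ (Fin n) => hg0 ‖y‖) x :=
        h1.comp x (contDiffAt_norm ℝ hx0)
      refine h2.congr_of_eventuallyEq ?_
      filter_upwards [hU.mem_nhds hx2] with y hy
      exact hg_eq_hg0 ‖y‖ hy
  refine ⟨hC4, ?_, ?_, ?_, ?_⟩
  -- C2
  · rw [hin 0 le_rfl zero_le_one]; norm_num
  -- C3
  · intro r hr
    rcases le_or_gt r 1 with h1 | h1
    · rw [hin r hr.le h1]
      have h62 : r^6 ≤ r^2 := pow_le_pow_of_le_one hr.le h1 (by norm_num)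
      unfold pa1 pa2 pa3 pa4
      nlinarith [pow_pos hr 2, pow_pos hr 4, pow_pos hr 8]
    · rw [hout r h1]
      have hrI : r ∈ Ioi (1/2:ℝ) := by rw [mem_Ioi]; linarith
      have hle : (∫ s in (1:ℝ)..r, 1/(1+Real.log s)) ≤ ∫ _ in (1:ℝ)..r, (1:ℝ) := by
        apply intervalIntegral.integral_mono_on h1.le (integrand_intervalIntegrable hrI)
          intervalIntegrable_const
        intro s hs
        have hs1 : 1 ≤ s := hs.1
        have hL1 : 1 ≤ 1 + Real.log s := by linarith [Real.log_nonneg hs1]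
        rw [div_le_one (by linarith)]; exact hL1
      rw [intervalIntegral.integral_const, smul_eq_mul, mul_one] at hle
      have hpa5 : pa5 = -737/384 := rfl
      linarith
  -- C4
  · intro r hr
    rcases le_or_gt r 1 with h1 | h1
    · rw [hin r hr h1]
      have h2 : r^2 ≤ r := by
        have := pow_le_pow_of_le_one hr h1 (show 1 ≤ 2 by norm_num)
        rwa [pow_one] at this
      have h4 : r^4 ≤ r := by
        have := pow_le_pow_of_le_one hr h1 (show 1 ≤ 4 by norm_num)
        rwa [pow_one] at this
      have h8 : r^8 ≤ r := by
        have := pow_le_pow_of_le_one hr h1 (show 1 ≤ 8 by norm_num)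
        rwa [pow_one] at this
      have h6 : 0 ≤ r^6 := pow_nonneg hr 6
      unfold pa1 pa2 pa3 pa4
      nlinarith
    · rw [hout r h1]
      have hI0 : 0 ≤ ∫ s in (1:ℝ)..r, 1/(1+Real.log s) := by
        apply intervalIntegral.integral_nonneg h1.le
        intro s hs
        have hL1 : 1 ≤ 1 + Real.log s := by linarith [Real.log_nonneg hs.1]
        positivity
      have hpa5 : pa5 = -737/384 := rfl
      linarith
  -- C5 : Hessian
  · intro x v hv
    haveI : Nontrivial (EuclideanSpace ℝ (Fin n)) := nontrivial_of_ne v 0 hv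
    -- gradient on the closed unit ball
    have hgrad_ball : ∀ y : EuclideanSpace ℝ (Fin n), ‖y‖ < 1 →
        gradient (fun z : EuclideanSpace ℝ (Fin n) => g ‖z‖) y = (2 * QA (‖y‖^2)) • y := by
      intro y hy
      have hgr := hasGradientAt_radial y (hasDerivAt_Q0 (‖y‖^2))
      have heq : (fun z : EuclideanSpace ℝ (Fin n) => g ‖z‖)
          =ᶠ[nhds y] (fun z => Q0 (‖z‖^2)) := by
        filter_upwards [Metric.isOpen_ball.mem_nhds (mem_ball_zero_iff.mpr hy)] with z hz
        exact hgQ z (le_of_lt (mem_ball_zero_iff.mp hz))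
      have hgr2 : HasGradientAt (fun z : EuclideanSpace ℝ (Fin n) => g ‖z‖)
          ((2 * QA (‖y‖^2)) • y) y := by
        rw [hasGradientAt_iff_hasFDerivAt] at hgr ⊢
        exact hgr.congr_of_eventuallyEq heq
      exact hgr2.gradient
    have hGIfd : ∀ y : EuclideanSpace ℝ (Fin n),
        HasFDerivAt (fun w : EuclideanSpace ℝ (Fin n) => (2 * QA (‖w‖^2)) • w)
          ((2 * QA (‖y‖^2)) • ContinuousLinearMap.id ℝ (EuclideanSpace ℝ (Fin n))
            + ((2 * QB (‖y‖^2)) • (2 • (innerSL ℝ y))).smulRight y) y := by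
      intro y
      exact hasFDerivAt_radial_smul y ((hasDerivAt_QA (‖y‖^2)).const_mul 2)
    have hgradC : ContDiff ℝ 3 (gradient (fun z : EuclideanSpace ℝ (Fin n) => g ‖z‖)) := by
      have hf3 : ContDiff ℝ 3 (fderiv ℝ (fun z : EuclideanSpace ℝ (Fin n) => g ‖z‖)) :=
        hC4.fderiv_right (by norm_num)
      exact ((InnerProductSpace.toDual ℝ (EuclideanSpace ℝ (Fin n))).symm.contDiff).comp hf3
    have hcont1 : Continuous (fderiv ℝ (gradient (fun z : EuclideanSpace ℝ (Fin n) => g ‖z‖))) :=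
      hgradC.continuous_fderiv (by norm_num)
    have hGIC : ContDiff ℝ 1 (fun w : EuclideanSpace ℝ (Fin n) => (2 * QA (‖w‖^2)) • w) := by
      have h1 : ContDiff ℝ 1 (fun t : ℝ => 2 * QA t) := by unfold QA; fun_prop
      exact (h1.comp (contDiff_norm_sq ℝ)).smul contDiff_id
    have hcont2 : Continuous (fderiv ℝ (fun w : EuclideanSpace ℝ (Fin n) => (2 * QA (‖w‖^2)) • w)) :=
      hGIC.continuous_fderiv one_ne_zero
    have hEqBall : EqOn (fderiv ℝ (gradient (fun z : EuclideanSpace ℝ (Fin n) => g ‖z‖)))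
        (fderiv ℝ (fun w : EuclideanSpace ℝ (Fin n) => (2 * QA (‖w‖^2)) • w))
        (Metric.ball (0 : EuclideanSpace ℝ (Fin n)) 1) := by
      intro y hy
      apply Filter.EventuallyEq.fderiv_eq
      filter_upwards [Metric.isOpen_ball.mem_nhds hy] with z hz
      rw [hgrad_ball z (mem_ball_zero_iff.mp hz)]
    have hclos : EqOn (fderiv ℝ (gradient (fun z : EuclideanSpace ℝ (Fin n) => g ‖z‖)))
        (fderiv ℝ (fun w : EuclideanSpace ℝ (Fin n) => (2 * QA (‖w‖^2)) • w))
        (Metric.closedBall (0 : EuclideanSpace ℝ (Fin n)) 1) := by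
      rw [← closure_ball (0 : EuclideanSpace ℝ (Fin n)) one_ne_zero]
      exact hEqBall.closure hcont1 hcont2
    rcases le_or_gt ‖x‖ 1 with hx1 | hx1
    · -- closed unit ball
      have hxball : x ∈ Metric.closedBall (0 : EuclideanSpace ℝ (Fin n)) 1 :=
        mem_closedBall_zero_iff.mpr hx1
      rw [hclos hxball, (hGIfd x).fderiv, quad_eval]
      have ht0 : 0 ≤ ‖x‖^2 := sq_nonneg _
      have ht1 : ‖x‖^2 ≤ 1 := by nlinarith [norm_nonneg x]
      refine quad_pos hv ?_ ?_
      · linarith [QA_pos ht0 ht1]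
      · have := QB_sum_pos ht0 ht1
        linarith
    · -- outside
      have hr1 : (1:ℝ) < ‖x‖ := hx1
      have hrr : Real.sqrt (‖x‖^2) = ‖x‖ := Real.sqrt_sq (norm_nonneg x)
      have hU3 : IsOpen {y : EuclideanSpace ℝ (Fin n) | 1 < ‖y‖} :=
        isOpen_lt continuous_const continuous_norm
      have hgrad_out : ∀ y : EuclideanSpace ℝ (Fin n), 1 < ‖y‖ →
          gradient (fun z : EuclideanSpace ℝ (Fin n) => g ‖z‖) y = UO (‖y‖^2) • y := by
        intro y hy1
        have hyI : ‖y‖ ∈ Ioi (1/2:ℝ) := by rw [mem_Ioi]; linarith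
        have hyrr : Real.sqrt (‖y‖^2) = ‖y‖ := Real.sqrt_sq (norm_nonneg y)
        have hsq : HasDerivAt Real.sqrt (1/(2*Real.sqrt (‖y‖^2))) (‖y‖^2) :=
          Real.hasDerivAt_sqrt (by nlinarith)
        have hpsi : HasDerivAt psi0 (psi1 (Real.sqrt (‖y‖^2))) (Real.sqrt (‖y‖^2)) := by
          rw [hyrr]; exact hasDerivAt_psi0 hyI
        have hPsiSqd : HasDerivAt PsiSq
            (psi1 (Real.sqrt (‖y‖^2)) * (1/(2*Real.sqrt (‖y‖^2)))) (‖y‖^2) := by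
          have := hpsi.comp (‖y‖^2) hsq
          exact this
        have hgr := hasGradientAt_radial y hPsiSqd
        have hsc : 2 * (psi1 (Real.sqrt (‖y‖^2)) * (1/(2*Real.sqrt (‖y‖^2)))) = UO (‖y‖^2) := by
          unfold UO
          rw [hyrr]
          have h0 : ‖y‖ ≠ 0 := by positivity
          field_simp
        rw [hsc] at hgr
        have heq2 : (fun z : EuclideanSpace ℝ (Fin n) => g ‖z‖)
            =ᶠ[nhds y] (fun z => PsiSq (‖z‖^2)) := by
          filter_upwards [hU3.mem_nhds hy1] with z hz
          have hz1 : (1:ℝ) < ‖z‖ := hz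
          rw [hout ‖z‖ hz1]
          unfold PsiSq psi0
          rw [Real.sqrt_sq (norm_nonneg z)]
        have hgr2 : HasGradientAt (fun z : EuclideanSpace ℝ (Fin n) => g ‖z‖)
            (UO (‖y‖^2) • y) y := by
          rw [hasGradientAt_iff_hasFDerivAt] at hgr ⊢
          exact hgr.congr_of_eventuallyEq heq2
        exact hgr2.gradient
      have hfd : fderiv ℝ (gradient (fun z : EuclideanSpace ℝ (Fin n) => g ‖z‖)) x
          = fderiv ℝ (fun y : EuclideanSpace ℝ (Fin n) => UO (‖y‖^2) • y) x := by
        apply Filter.EventuallyEq.fderiv_eq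
        filter_upwards [hU3.mem_nhds hr1] with z hz
        exact hgrad_out z hz
      have hxI : ‖x‖ ∈ Ioi (1/2:ℝ) := by rw [mem_Ioi]; linarith
      have hsq : HasDerivAt Real.sqrt (1/(2*Real.sqrt (‖x‖^2))) (‖x‖^2) :=
        Real.hasDerivAt_sqrt (by nlinarith)
      have hin2 : HasDerivAt (fun r => psi1 r * r⁻¹)
          (psi2 (Real.sqrt (‖x‖^2)) * (Real.sqrt (‖x‖^2))⁻¹
            + psi1 (Real.sqrt (‖x‖^2)) * (-(((Real.sqrt (‖x‖^2)))^2)⁻¹)) (Real.sqrt (‖x‖^2)) := by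
        rw [hrr]; exact (hasDerivAt_psi1 hxI).mul (hasDerivAt_rinv hxI)
      have hUt : HasDerivAt UO
          ((psi2 (Real.sqrt (‖x‖^2)) * (Real.sqrt (‖x‖^2))⁻¹
            + psi1 (Real.sqrt (‖x‖^2)) * (-(((Real.sqrt (‖x‖^2)))^2)⁻¹))
            * (1/(2*Real.sqrt (‖x‖^2)))) (‖x‖^2) := by
        have := hin2.comp (‖x‖^2) hsq
        exact this
      have hUOv : UO (‖x‖^2) = psi1 ‖x‖ * ‖x‖⁻¹ := by unfold UO; rw [hrr]
      rw [hfd, (hasFDerivAt_radial_smul x hUt).fderiv, quad_eval, hUOv, hrr]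
      have hx0 : (0:ℝ) < ‖x‖ := by linarith
      refine quad_pos hv ?_ ?_
      · have := psi1_ge_two hr1.le
        have : 0 < psi1 ‖x‖ := by linarith
        positivity
      · rw [outer_sum hr1]
        exact psi2_pos hr1.le
end
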